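/- Let X be a nonnegative real random variable on a probability space with finite second moment. Then Var(√X) ≤ (1/√2)·√(Var(X)). -/

import Mathlib

open MeasureTheory ProbabilityTheory
open scoped ENNReal

lemma mpFst {Ω : Type*} [MeasurableSpace Ω] (μ : Measure Ω) [IsProbabilityMeasure μ] :
    MeasurePreserving (Prod.fst : Ω × Ω → Ω) (μ.prod μ) μ :=
  ⟨measurable_fst, by simp⟩

lemma mpSnd {Ω : Type*} [MeasurableSpace Ω] (μ : Measure Ω) [IsProbabilityMeasure μ] :
    MeasurePreserving (Prod.snd : Ω × Ω → Ω) (μ.prod μ) μ :=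
  ⟨measurable_snd, by simp⟩

lemma sq_memℒp_two {Ω : Type*} [MeasurableSpace Ω] {μ : Measure Ω} {f : Ω → ℝ}
    (hf : MemLp f 4 μ) : MemLp (fun x => f x ^ 2) 2 μ := by
  haveI : ENNReal.HolderTriple 4 4 2 := ⟨by
    simp only [← one_div]; rw [ENNReal.div_add_div_same, ENNReal.div_eq_div_iff] <;> norm_num⟩
  have := hf.smul (𝕜 := ℝ) hf (p := 4) (q := 4) (r := 2)
  simpa [Pi.smul_apply', smul_eq_mul, sq, Pi.mul_def] using this

lemma pair_integral {Ω : Type*} [MeasurableSpace Ω] (μ : Measure Ω) [IsProbabilityMeasure μ]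
    (f : Ω → ℝ) (hf : MemLp f 2 μ) :
    ∫ p, (f p.1 - f p.2)^2 ∂(μ.prod μ) = 2 * variance f μ := by
  have h1 : MemLp (fun p : Ω × Ω => f p.1) 2 (μ.prod μ) := hf.comp_measurePreserving (mpFst μ)
  have h2 : MemLp (fun p : Ω × Ω => f p.2) 2 (μ.prod μ) := hf.comp_measurePreserving (mpSnd μ)
  have i1 : Integrable (fun p : Ω × Ω => f p.1 ^ 2) (μ.prod μ) := h1.integrable_sq
  have i2 : Integrable (fun p : Ω × Ω => f p.2 ^ 2) (μ.prod μ) := h2.integrable_sq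
  have i12 : Integrable (fun p : Ω × Ω => f p.1 * f p.2) (μ.prod μ) := by
    haveI : ENNReal.HolderTriple 2 2 1 := ⟨by
      simp only [← one_div]; rw [ENNReal.div_add_div_same, ENNReal.div_eq_div_iff] <;> norm_num⟩
    have := (h2.smul (𝕜 := ℝ) h1 (r := 1)).integrable le_rfl
    simpa [Pi.smul_apply', smul_eq_mul, Pi.mul_def] using this
  have e1 : ∫ p : Ω × Ω, f p.1 ^ 2 ∂(μ.prod μ) = ∫ x, f x ^ 2 ∂μ := by
    have := integral_prod_mul (μ := μ) (ν := μ) (fun x => f x ^ 2) (fun _ => (1 : ℝ))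
    simpa using this
  have e2 : ∫ p : Ω × Ω, f p.2 ^ 2 ∂(μ.prod μ) = ∫ x, f x ^ 2 ∂μ := by
    have := integral_prod_mul (μ := μ) (ν := μ) (fun _ => (1 : ℝ)) (fun x => f x ^ 2)
    simpa using this
  have e12 : ∫ p : Ω × Ω, f p.1 * f p.2 ∂(μ.prod μ) = (∫ x, f x ∂μ) ^ 2 := by
    have := integral_prod_mul (μ := μ) (ν := μ) f f
    simpa [sq] using this
  rw [variance_eq_sub hf]
  calc ∫ p, (f p.1 - f p.2)^2 ∂(μ.prod μ)
      = ∫ p : Ω × Ω, (f p.1 ^ 2 + f p.2 ^ 2 - 2 * (f p.1 * f p.2)) ∂(μ.prod μ) := by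
        apply integral_congr_ae; filter_upwards with p; ring
    _ = (∫ p : Ω × Ω, f p.1 ^ 2 ∂(μ.prod μ)) + (∫ p : Ω × Ω, f p.2 ^ 2 ∂(μ.prod μ))
        - 2 * ∫ p : Ω × Ω, f p.1 * f p.2 ∂(μ.prod μ) := by
        rw [integral_sub (f := fun p : Ω × Ω => f p.1 ^ 2 + f p.2 ^ 2)
          (g := fun p : Ω × Ω => 2 * (f p.1 * f p.2)) (i1.add i2) (i12.const_mul 2),
          integral_add (f := fun p : Ω × Ω => f p.1 ^ 2) (g := fun p : Ω × Ω => f p.2 ^ 2) i1 i2,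
          integral_const_mul]
    _ = 2 * (μ[f ^ 2] - μ[f] ^ 2) := by
        rw [e1, e2, e12]; simp only [Pi.pow_apply]; ring

/-- For a nonnegative real random variable `X` with finite second moment,
`Var(√X) ≤ (1/√2)·√(Var X)`. -/
theorem stmt_1 {Ω : Type*} [MeasurableSpace Ω] (μ : Measure Ω)
    [IsProbabilityMeasure μ] (X : Ω → ℝ)
    (hX2 : MeasureTheory.MemLp X 2 μ) (hX0 : ∀ ω, 0 ≤ X ω) :
    variance (fun ω => Real.sqrt (X ω)) μ
      ≤ (Real.sqrt 2)⁻¹ * Real.sqrt (variance X μ) := by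
  set g : Ω → ℝ := fun ω => Real.sqrt (X ω) with hg
  have hgm : AEStronglyMeasurable g μ :=
    Real.continuous_sqrt.comp_aestronglyMeasurable hX2.1
  have hgsq : ∀ ω, g ω ^ 2 = X ω := fun ω => Real.sq_sqrt (hX0 ω)
  have hg4 : MemLp g 4 μ := by
    have key : (fun x => ‖g x‖ ^ (2 : ℝ≥0∞).toReal) = X := by
      funext x
      rw [ENNReal.toReal_ofNat, Real.norm_eq_abs, abs_of_nonneg (Real.sqrt_nonneg _),
        Real.rpow_two, hgsq]
    have h42 : (4 : ℝ≥0∞) / 2 = 2 :=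
      ((ENNReal.eq_div_iff two_ne_zero ENNReal.ofNat_ne_top).2 (by norm_num)).symm
    have := memLp_norm_rpow_iff (p := 4) (q := 2) hgm two_ne_zero ENNReal.ofNat_ne_top
    rw [key, h42] at this
    exact this.1 hX2
  have hg2 : MemLp g 2 μ := hg4.mono_exponent (by norm_num)
  set ν : Measure (Ω × Ω) := μ.prod μ with hν
  set h : Ω × Ω → ℝ := fun p => g p.1 - g p.2 with hh
  have hh4 : MemLp h 4 ν :=
    (hg4.comp_measurePreserving (mpFst μ)).sub (hg4.comp_measurePreserving (mpSnd μ))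
  have hhsq2 : MemLp (fun p => h p ^ 2) 2 ν := sq_memℒp_two hh4
  -- (∫ h²)² ≤ ∫ h⁴
  have jensen : (∫ p, h p ^ 2 ∂ν) ^ 2 ≤ ∫ p, (h p ^ 2) ^ 2 ∂ν := by
    have hv := variance_nonneg (fun p => h p ^ 2) ν
    rw [variance_eq_sub hhsq2] at hv
    have : (∫ p, (fun q => h q ^ 2) p ∂ν) ^ 2 ≤ ∫ p, ((fun q => h q ^ 2) ^ 2) p ∂ν := by
      linarith
    simpa [Pi.pow_apply] using this
  -- ∫ h⁴ ≤ ∫ (X a - X b)²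
  have hXsq : Integrable (fun p : Ω × Ω => (X p.1 - X p.2) ^ 2) ν :=
    ((hX2.comp_measurePreserving (mpFst μ)).sub
      (hX2.comp_measurePreserving (mpSnd μ))).integrable_sq
  have ptwise : ∀ p : Ω × Ω, (h p ^ 2) ^ 2 ≤ (X p.1 - X p.2) ^ 2 := by
    intro p
    have ha := Real.sqrt_nonneg (X p.1)
    have hb := Real.sqrt_nonneg (X p.2)
    have ea := hgsq p.1
    have eb := hgsq p.2
    simp only [hh]
    nlinarith [sq_nonneg (g p.1 - g p.2), mul_nonneg ha hb, sq_nonneg (g p.1 + g p.2)]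
  have step2 : ∫ p, (h p ^ 2) ^ 2 ∂ν ≤ ∫ p, (X p.1 - X p.2) ^ 2 ∂ν :=
    integral_mono hhsq2.integrable_sq hXsq ptwise
  have eg : ∫ p, h p ^ 2 ∂ν = 2 * variance g μ := pair_integral μ g hg2
  have eX : ∫ p : Ω × Ω, (X p.1 - X p.2) ^ 2 ∂ν = 2 * variance X μ := pair_integral μ X hX2
  have key : (2 * variance g μ) ^ 2 ≤ 2 * variance X μ := by
    calc (2 * variance g μ) ^ 2 = (∫ p, h p ^ 2 ∂ν) ^ 2 := by rw [eg]
      _ ≤ ∫ p, (h p ^ 2) ^ 2 ∂ν := jensen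
      _ ≤ ∫ p, (X p.1 - X p.2) ^ 2 ∂ν := step2
      _ = 2 * variance X μ := eX
  have hVg : 0 ≤ variance g μ := variance_nonneg g μ
  have hsq : variance g μ ^ 2 ≤ variance X μ / 2 := by nlinarith
  calc variance g μ = Real.sqrt (variance g μ ^ 2) := (Real.sqrt_sq hVg).symm
    _ ≤ Real.sqrt (variance X μ / 2) := Real.sqrt_le_sqrt hsq
    _ = Real.sqrt (variance X μ) / Real.sqrt 2 :=
        Real.sqrt_div (variance_nonneg X μ) 2
    _ = (Real.sqrt 2)⁻¹ * Real.sqrt (variance X μ) := by ring
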